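/- Every family of distributions induced by an AHK model is projective. Let L_Int be a finite relational vocabulary of maximal arity a ≥ 1 and L_Ext ⊆ L_Int. Given an AHK model — a family of i.i.d. uniform [0,1] random variables U_{(i_1,...,i_m)} indexed by strictly increasing tuples of naturals of length 0 ≤ m ≤ a, together with permutation-equivariant measurable functions f_m mapping the collection of pairs (U-value, extensional data of arity n) over all increasing subsequences of length n ≤ m to intensional data of arity m — the induced L_Ext-L_Int family of distributions (which assigns to each finite L_Ext-structure D on {a_1,...,a_n} and each L_Int-expansion X the probability that the functions f output exactly the intensional data of X on all increasing tuples) is projective: its marginals are invariant under embeddings of L_Ext-structures. -/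

import Mathlib

open MeasureTheory

/-- An `L`-structure on domain `D`: an interpretation of each relation symbol `R`
(of arity `ar R`) as a set of `ar R`-tuples from `D`. -/
def Struc (L : Type) (ar : L → ℕ) (D : Type) : Type :=
  ∀ R : L, (Fin (ar R) → D) → Prop

/-- `ω` (a structure on `D`) extends the image of `X` (a structure on `D'`) along the
injection `ι`; equivalently, `ι` is an embedding of structures from `X` to `ω`. -/
def ExtendsAlong {L : Type} {ar : L → ℕ} {D' D : Type} (ι : D' ↪ D)
    (X : Struc L ar D') (ω : Struc L ar D) : Prop :=
  ∀ (R : L) (s : Fin (ar R) → D'), ω R (fun i => ι (s i)) ↔ X R s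

/-- Transport of a structure along a bijection. -/
def Struc.map {L : Type} {ar : L → ℕ} {D D' : Type} (e : D ≃ D')
    (X : Struc L ar D) : Struc L ar D' :=
  fun R t => X R (fun i => e.symm (t i))

/-- The reduct of a structure to a subvocabulary `E`. -/
def reduct {L : Type} {ar : L → ℕ} (E : Set L) {D : Type} (X : Struc L ar D) :
    Struc ↥E (fun R => ar ↑R) D :=
  fun R t => X ↑R t

/-- A family of distributions indexed by all finite sets is projective if marginals
are invariant under injections. -/
def Projective {L : Type} {ar : L → ℕ}
    (P : ∀ (D : Type) [Fintype D], PMF (Struc L ar D)) : Prop :=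
  ∀ (D' D : Type) [Fintype D'] [Fintype D] (ι : D' ↪ D) (X : Struc L ar D'),
    P D' X = (P D).toOuterMeasure {ω | ExtendsAlong ι X ω}

/-- A structured (`S`-input, `T`-output) family of distributions is projective if
marginals are invariant under embeddings of input structures. -/
def ProjFam {S T : Type} {arS : S → ℕ} {arT : T → ℕ}
    (P : ∀ (D : Type) [Fintype D], Struc S arS D → PMF (Struc T arT D)) : Prop :=
  ∀ (D' D : Type) [Fintype D'] [Fintype D] (ι : D' ↪ D)
    (A' : Struc S arS D') (A : Struc S arS D), ExtendsAlong ι A' A →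
    ∀ X : Struc T arT D',
      P D' A' X = (P D A).toOuterMeasure {ω | ExtendsAlong ι X ω}

open scoped ENNReal

/-- Strictly increasing `n`-tuples from `Fin m`. -/
abbrev Inc (n m : ℕ) : Type := {s : Fin n → Fin m // StrictMono s}

/-- Index set for the i.i.d. uniform random variables of an AHK model: strictly
increasing tuples of naturals of length at most `a`. -/
def Idx (a : ℕ) : Type := Σ k : Fin (a + 1), {t : Fin (k : ℕ) → ℕ // StrictMono t}

/-- Extensional data of arity `n`: for each extensional relation symbol, the literals
using exactly the `n` given variables (no equality). -/
def ExtData (L : Type) (ar : L → ℕ) (E : Set L) (n : ℕ) : Type :=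
  ∀ R : ↥E, {t : Fin (ar ↑R) → Fin n // Function.Surjective t} → Prop

/-- Purely intensional data of arity `m`. -/
def IntData (L : Type) (ar : L → ℕ) (E : Set L) (m : ℕ) : Type :=
  ∀ R : {R : L // R ∉ E}, {t : Fin (ar ↑R) → Fin m // Function.Surjective t} → Prop

instance (L : Type) (ar : L → ℕ) (E : Set L) (n : ℕ) :
    MeasurableSpace (ExtData L ar E n) := ⊤

instance (L : Type) (ar : L → ℕ) (E : Set L) (m : ℕ) :
    MeasurableSpace (IntData L ar E m) := ⊤

/-- The input of the AHK function `f_m`: for every `n ≤ m` and every strictly increasing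
subsequence of length `n`, a value in `[0,1]` (a real) together with extensional data of
arity `n`. -/
abbrev AHKInput (L : Type) (ar : L → ℕ) (E : Set L) (m : ℕ) : Type :=
  ∀ n : Fin (m + 1), Inc (n : ℕ) m → ℝ × ExtData L ar E (n : ℕ)

/-- The action of a permutation of the `m` variables on the input of `f_m`. -/
noncomputable def permInput {L : Type} {ar : L → ℕ} {E : Set L} {m : ℕ}
    (e : Equiv.Perm (Fin m)) (g : AHKInput L ar E m) : AHKInput L ar E m :=
  fun n s =>
    let c : Fin (n : ℕ) → Fin m := fun i => e (s.1 i)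
    let σ : Equiv.Perm (Fin (n : ℕ)) := Tuple.sort c
    let p := g n ⟨fun i => c (σ i),
      (Tuple.monotone_sort c).strictMono_of_injective
        ((e.injective.comp s.2.injective).comp σ.injective)⟩
    (p.1, fun R t => p.2 R ⟨fun i => σ.symm (t.1 i), σ.symm.surjective.comp t.2⟩)

/-- The action of a permutation of the `m` variables on intensional data of arity `m`. -/
def permInt {L : Type} {ar : L → ℕ} {E : Set L} {m : ℕ}
    (e : Equiv.Perm (Fin m)) (ψ : IntData L ar E m) : IntData L ar E m :=
  fun R t => ψ R ⟨fun i => e (t.1 i), e.surjective.comp t.2⟩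

attribute [local instance] Classical.propDecidable

/-- An AHK model for `L_Int` over `L_Ext`, with maximal arity `a`: measurable,
permutation-equivariant functions `f_m` producing the intensional data of arity `m`. -/
structure AHKModel (L : Type) (ar : L → ℕ) (E : Set L) (a : ℕ) where
  f : ∀ m : ℕ, m ≤ a → AHKInput L ar E m → IntData L ar E m
  measurable : ∀ m hm, Measurable (f m hm)
  equivariant : ∀ m hm (e : Equiv.Perm (Fin m)) g,
    f m hm (permInput e g) = permInt e (f m hm g)

/-- The arguments handed to `f_m` at the increasing tuple `j` of elements of the domain
`Fin n`: the uniform random variables attached to the increasing subsequences of `j`,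
together with the extensional data of `A` there. -/
noncomputable def ahkArgs {L : Type} {ar : L → ℕ} {E : Set L} {a : ℕ} {Ω : Type}
    (U : Idx a → Ω → ℝ) (w : Ω) {n m : ℕ} (hm : m ≤ a)
    (A : Struc ↥E (fun R => ar ↑R) (Fin n)) (j : Fin m → Fin n) (hj : StrictMono j) :
    AHKInput L ar E m :=
  fun k s =>
    (U ⟨⟨(k : ℕ), by have := k.isLt; omega⟩,
        ⟨fun i => ((j (s.1 i) : Fin n) : ℕ), fun x y h => hj (s.2 h)⟩⟩ w,
     fun R t => A R (fun i => j (s.1 (t.1 i))))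

/-- The random structure generated by the AHK model: extensional relations are read off
from `A`, and each purely intensional atom is determined by the output of `f_m` on the
increasing enumeration of the elements occurring in it. -/
noncomputable def ahkStruc {L : Type} {ar : L → ℕ} {E : Set L} {a : ℕ} {Ω : Type}
    (Mo : AHKModel L ar E a) (ha : ∀ R : L, ar R ≤ a)
    (U : Idx a → Ω → ℝ) (w : Ω) {n : ℕ}
    (A : Struc ↥E (fun R => ar ↑R) (Fin n)) : Struc L ar (Fin n) :=
  fun R t =>
    if hR : R ∈ E then A ⟨R, hR⟩ t
    else
      let s : Finset (Fin n) := Finset.image t Finset.univ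
      let oi := s.orderIsoOfFin rfl
      have hm : s.card ≤ a := le_trans (le_trans Finset.card_image_le (by simp)) (ha R)
      Mo.f s.card hm
        (ahkArgs U w hm A (fun i => ↑(oi i)) (fun x y h => oi.strictMono h))
        ⟨R, hR⟩
        ⟨fun i => oi.symm ⟨t i, Finset.mem_image.mpr ⟨i, Finset.mem_univ i, rfl⟩⟩, by
          intro y
          obtain ⟨i, -, hi⟩ := Finset.mem_image.mp (oi y).2
          have h2 : (⟨t i, Finset.mem_image.mpr ⟨i, Finset.mem_univ i, rfl⟩⟩ : ↥s) = oi y :=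
            Subtype.ext hi
          exact ⟨i, by simpa using congrArg oi.symm h2⟩⟩


/-! ### Auxiliary lemmas for the proof -/

section Aux

/-- Two strict monotone tuples with the same range are equal. -/
lemma strictMono_canon {α : Type*} [LinearOrder α] {k : ℕ} {f g : Fin k → α}
    (hf : StrictMono f) (hg : StrictMono g)
    (h : Set.range f = Set.range g) : f = g := by
  haveI : WellFoundedLT (Fin k) := inferInstance
  exact (hf.range_inj hg).mp h

lemma card_image_univ {α β : Type*} [Fintype α] [DecidableEq β] {t : α → β}
    (ht : Function.Injective t) :
    (Finset.image t Finset.univ).card = Fintype.card α := by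
  have h1 : (Finset.image t Finset.univ).card = (Finset.univ : Finset α).card :=
    Finset.card_image_of_injective _ ht
  simpa using h1

/-- The sorted version of an injective tuple of naturals. -/
noncomputable def sortTup {k : ℕ} (t : Fin k → ℕ) (ht : Function.Injective t) :
    {u : Fin k → ℕ // StrictMono u} :=
  ⟨⇑((Finset.image t Finset.univ).orderEmbOfFin
      (by rw [card_image_univ ht, Fintype.card_fin])),
    (Finset.orderEmbOfFin _ _).strictMono⟩

lemma range_sortTup {k : ℕ} (t : Fin k → ℕ) (ht : Function.Injective t) :
    Set.range (sortTup t ht).1 = Set.range t := by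
  show Set.range ⇑((Finset.image t Finset.univ).orderEmbOfFin _) = _
  rw [Finset.range_orderEmbOfFin, Finset.coe_image, Finset.coe_univ, Set.image_univ]

lemma sortTup_eq {k : ℕ} {t g : Fin k → ℕ} (ht : Function.Injective t) (hg : StrictMono g)
    (h : Set.range g = Set.range t) : (sortTup t ht).1 = g :=
  strictMono_canon (sortTup t ht).2 hg (by rw [range_sortTup, h])

end Aux

section Char

variable {L : Type} {ar : L → ℕ} {E : Set L} {a : ℕ} {Ω : Type}

/-- Characterization of `ahkStruc` at an intensional relation, via an arbitrary
strictly monotone enumeration of the occurring elements. -/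
lemma ahkStruc_eq (Mo : AHKModel L ar E a) (ha : ∀ R : L, ar R ≤ a)
    (U : Idx a → Ω → ℝ) (w : Ω) {n : ℕ} (A : Struc ↥E (fun R => ar ↑R) (Fin n))
    {R : L} (hR : R ∉ E) (t : Fin (ar R) → Fin n)
    {m : ℕ} (hm : m ≤ a) (j : Fin m → Fin n) (hj : StrictMono j)
    (u : Fin (ar R) → Fin m) (hu : ∀ i, j (u i) = t i) (husurj : Function.Surjective u)
    (himg : Set.range j = Set.range t) :
    ahkStruc Mo ha U w A R t =
      Mo.f m hm (ahkArgs U w hm A j hj) ⟨R, hR⟩ ⟨u, husurj⟩ := by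
  have hmemt : ∀ x, j x ∈ Finset.image t Finset.univ := by
    intro x
    obtain ⟨i, hi⟩ := himg ▸ Set.mem_range_self x
    exact Finset.mem_image.mpr ⟨i, Finset.mem_univ i, hi⟩
  have hcard : (Finset.image t Finset.univ).card = m := by
    have h2 : Finset.image j Finset.univ = Finset.image t Finset.univ :=
      Finset.coe_injective (by
        simp only [Finset.coe_image, Finset.coe_univ, Set.image_univ, himg])
    rw [← h2, card_image_univ hj.injective, Fintype.card_fin]
  subst hcard
  have hju : j = ⇑((Finset.image t Finset.univ).orderEmbOfFin rfl) :=
    Finset.orderEmbOfFin_unique rfl hmemt hj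
  subst hju
  simp only [ahkStruc, dif_neg hR]
  have hueq : (fun i => ((Finset.image t Finset.univ).orderIsoOfFin rfl).symm
      ⟨t i, Finset.mem_image.mpr ⟨i, Finset.mem_univ i, rfl⟩⟩) = u := by
    funext i
    rw [OrderIso.symm_apply_eq]
    refine Subtype.ext ?_
    rw [Finset.coe_orderIsoOfFin_apply]
    exact (hu i).symm
  exact congrArg₂ (fun g v => Mo.f _ hm g ⟨R, hR⟩ v) rfl (Subtype.ext (funext fun i =>
    congrFun hueq i))

end Char

section Relabel

variable {a : ℕ}

/-- Extension of an embedding `Fin n' ↪ Fin n` to an injection `ℕ → ℕ`. -/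
def extmap (n' n : ℕ) (ι : Fin n' ↪ Fin n) : ℕ → ℕ :=
  fun i => if h : i < n' then ((ι ⟨i, h⟩ : Fin n) : ℕ) else n + i

lemma extmap_lt (n' n : ℕ) (ι : Fin n' ↪ Fin n) (x : Fin n') :
    extmap n' n ι x = ((ι x : Fin n) : ℕ) := by
  simp only [extmap, dif_pos x.isLt]

lemma extmap_inj (n' n : ℕ) (ι : Fin n' ↪ Fin n) : Function.Injective (extmap n' n ι) := by
  intro x y h
  unfold extmap at h
  split_ifs at h with h1 h2 h2
  · exact congrArg Fin.val (ι.injective (Fin.val_injective h))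
  · have := (ι ⟨x, h1⟩).isLt; omega
  · have := (ι ⟨y, h2⟩).isLt; omega
  · omega

/-- Relabeling of the index set of the random variables induced by `ι`. -/
noncomputable def relabel (n' n : ℕ) (ι : Fin n' ↪ Fin n) : Idx a → Idx a :=
  fun x => ⟨x.1, sortTup (fun i => extmap n' n ι (x.2.1 i))
    ((extmap_inj n' n ι).comp x.2.2.injective)⟩

lemma relabel_eq {n' n : ℕ} (ι : Fin n' ↪ Fin n) {k : Fin (a + 1)}
    (t : Fin (k : ℕ) → ℕ) (ht : StrictMono t) (g : Fin (k : ℕ) → ℕ) (hg : StrictMono g)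
    (himg : Set.range g = Set.range (fun i => extmap n' n ι (t i))) :
    relabel n' n ι ⟨k, t, ht⟩ = ⟨k, g, hg⟩ := by
  unfold relabel
  exact congrArg (fun v => (⟨k, v⟩ : Idx a)) (Subtype.ext (sortTup_eq _ hg himg))

end Relabel

section Clause

variable {L : Type} {ar : L → ℕ} {E : Set L} {a : ℕ} {Ω : Type}

lemma ahkStruc_clause (Mo : AHKModel L ar E a) (ha : ∀ R : L, ar R ≤ a)
    {n' n : ℕ} (ι : Fin n' ↪ Fin n)
    (A' : Struc ↥E (fun R => ar ↑R) (Fin n')) (A : Struc ↥E (fun R => ar ↑R) (Fin n))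
    (hAA' : ExtendsAlong ι A' A) (U : Idx a → Ω → ℝ) (w : Ω)
    (R : L) (s : Fin (ar R) → Fin n') :
    ahkStruc Mo ha (fun i => U (relabel n' n ι i)) w A' R s
      = ahkStruc Mo ha U w A R (fun i => ι (s i)) := by
  by_cases hR : R ∈ E
  · simp only [ahkStruc, dif_pos hR]
    exact propext (hAA' ⟨R, hR⟩ s).symm
  · -- set-up on the `n'` side
    set s₀ : Finset (Fin n') := Finset.image s Finset.univ with hs₀def
    set k := s₀.card with hkdef
    have hk : k ≤ a := le_trans (le_trans Finset.card_image_le (by simp)) (ha R)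
    set oi₀ := s₀.orderIsoOfFin rfl with hoi₀def
    set j₀ : Fin k → Fin n' := fun i => ↑(oi₀ i) with hj₀def
    have hj₀ : StrictMono j₀ := fun x y h => oi₀.strictMono h
    have hmem : ∀ i, s i ∈ s₀ := fun i => Finset.mem_image.mpr ⟨i, Finset.mem_univ i, rfl⟩
    set u₀ : Fin (ar R) → Fin k := fun i => oi₀.symm ⟨s i, hmem i⟩ with hu₀def
    have hj₀u₀ : ∀ i, j₀ (u₀ i) = s i := by
      intro i; simp only [hj₀def, hu₀def, OrderIso.apply_symm_apply]
    have hu₀surj : Function.Surjective u₀ := by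
      intro y
      obtain ⟨i, -, hi⟩ := Finset.mem_image.mp (oi₀ y).2
      refine ⟨i, ?_⟩
      have : (⟨s i, hmem i⟩ : ↥s₀) = oi₀ y := Subtype.ext hi
      simp [hu₀def, this]
    have hrange₀ : Set.range j₀ = Set.range s := by
      have h1 : Set.range j₀ = ↑s₀ := by
        rw [hj₀def, hoi₀def]
        simp only [Finset.coe_orderIsoOfFin_apply]
        exact Finset.range_orderEmbOfFin _ _
      rw [h1, hs₀def]
      simp [Finset.coe_image]
    -- set-up on the `n` side
    set t : Fin (ar R) → Fin n := fun i => ι (s i) with htdef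
    set s₁ : Finset (Fin n) := Finset.image t Finset.univ with hs₁def
    have hs₁img : s₁ = Finset.image ι s₀ := by
      rw [hs₁def, hs₀def, Finset.image_image]; rfl
    have hcard₁ : s₁.card = k := by
      rw [hs₁img, hkdef, Finset.card_image_of_injective _ ι.injective]
    set oi₁ := s₁.orderIsoOfFin hcard₁ with hoi₁def
    set j : Fin k → Fin n := fun i => ↑(oi₁ i) with hjdef
    have hj : StrictMono j := fun x y h => oi₁.strictMono h
    have hrange₁ : Set.range j = Set.range t := by
      have h1 : Set.range j = ↑s₁ := by
        rw [hjdef, hoi₁def]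
        simp only [Finset.coe_orderIsoOfFin_apply]
        exact Finset.range_orderEmbOfFin _ _
      rw [h1, hs₁def]
      simp [Finset.coe_image]
    have hmem₁ : ∀ i, ι (j₀ i) ∈ s₁ := by
      intro i
      rw [hs₁img]
      refine Finset.mem_image_of_mem ι ?_
      have : j₀ i ∈ Set.range j₀ := Set.mem_range_self i
      rw [hrange₀] at this
      obtain ⟨x, hx⟩ := this
      rw [hs₀def]
      exact Finset.mem_image.mpr ⟨x, Finset.mem_univ x, hx⟩
    set e : Fin k → Fin k := fun i => oi₁.symm ⟨ι (j₀ i), hmem₁ i⟩ with hedef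
    have hje : ∀ i, j (e i) = ι (j₀ i) := by
      intro i; simp only [hjdef, hedef, OrderIso.apply_symm_apply]
    have einj : Function.Injective e := by
      intro x y h
      apply hj₀.injective
      apply ι.injective
      rw [← hje x, ← hje y, h]
    set eP : Equiv.Perm (Fin k) := Equiv.ofBijective e (Finite.injective_iff_bijective.mp einj)
      with hePdef
    have hePapp : ∀ i, eP i = e i := fun i => rfl
    -- the key computation
    have hkey : permInput eP (ahkArgs U w hk A j hj)
        = ahkArgs (fun i => U (relabel n' n ι i)) w hk A' j₀ hj₀ := by
      funext m' s'
      simp only [permInput, ahkArgs]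
      set c : Fin (m' : ℕ) → Fin k := fun i => eP (s'.1 i) with hcdef
      set σ : Equiv.Perm (Fin (m' : ℕ)) := Tuple.sort c with hσdef
      have hcσ : StrictMono (fun i => c (σ i)) :=
        (Tuple.monotone_sort c).strictMono_of_injective
          ((eP.injective.comp s'.2.injective).comp σ.injective)
      have hfun : (fun i => extmap n' n ι ((j₀ (s'.1 i) : Fin n') : ℕ))
          = fun i => ((j (c i) : Fin n) : ℕ) := by
        funext i
        rw [extmap_lt, ← hje (s'.1 i)]
        rfl
      have hg : StrictMono (fun i => ((j (c (σ i)) : Fin n) : ℕ)) :=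
        fun x y h => hj (hcσ h)
      have himg2 : Set.range (fun i => ((j (c (σ i)) : Fin n) : ℕ))
          = Set.range (fun i => extmap n' n ι ((j₀ (s'.1 i) : Fin n') : ℕ)) := by
        rw [hfun]
        exact Function.Surjective.range_comp σ.surjective (fun x => ((j (c x) : Fin n) : ℕ))
      refine Prod.ext ?_ ?_
      · show U _ w = U (relabel n' n ι _) w
        have hEQ := (relabel_eq ι
            (k := ⟨(m' : ℕ), Nat.lt_succ_of_le (le_trans (Nat.lt_succ_iff.mp m'.isLt) hk)⟩)
            (fun i => ((j₀ (s'.1 i) : Fin n') : ℕ)) (fun x y h => hj₀ (s'.2 h))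
            (fun i => ((j (c (σ i)) : Fin n) : ℕ)) hg himg2).symm
        exact congrArg (fun idx => U idx w) hEQ
      · funext R' t'
        show A R' _ = A' R' _
        have h1 : (fun i => j (c (σ (σ.symm (t'.1 i))))) = fun i => ι (j₀ (s'.1 (t'.1 i))) := by
          funext i
          rw [Equiv.apply_symm_apply]
          exact hje (s'.1 (t'.1 i))
        calc A R' (fun i => j (c (σ (σ.symm (t'.1 i)))))
            = A R' (fun i => ι (j₀ (s'.1 (t'.1 i)))) := by rw [h1]
          _ = A' R' (fun i => j₀ (s'.1 (t'.1 i))) := propext (hAA' R' _)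

    have hu : ∀ i, j (eP (u₀ i)) = t i := by
      intro i
      rw [hePapp, hje, hj₀u₀, htdef]
    have husurj : Function.Surjective (fun i => eP (u₀ i)) :=
      fun y => (hu₀surj (eP.symm y)).imp (fun i hi => by simp [hi])
    rw [ahkStruc_eq Mo ha _ w A' hR s hk j₀ hj₀ u₀ hj₀u₀ hu₀surj hrange₀,
      ahkStruc_eq Mo ha U w A hR t hk j hj (fun i => eP (u₀ i)) hu husurj hrange₁,
      ← hkey, Mo.equivariant k hk eP _]
    rfl

end Clause

section Pointwise

variable {L : Type} {ar : L → ℕ} {E : Set L} {a : ℕ} {Ω : Type}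

lemma ahkStruc_pointwise (Mo : AHKModel L ar E a) (ha : ∀ R : L, ar R ≤ a)
    {n' n : ℕ} (ι : Fin n' ↪ Fin n)
    (A' : Struc ↥E (fun R => ar ↑R) (Fin n')) (A : Struc ↥E (fun R => ar ↑R) (Fin n))
    (hAA' : ExtendsAlong ι A' A) (U : Idx a → Ω → ℝ) (w : Ω) (X : Struc L ar (Fin n')) :
    (ahkStruc Mo ha (fun i => U (relabel n' n ι i)) w A' = X)
      ↔ ExtendsAlong ι X (ahkStruc Mo ha U w A) := by
  constructor
  · intro h R s
    rw [← h, ← ahkStruc_clause Mo ha ι A' A hAA' U w R s]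
  · intro h
    funext R s
    rw [ahkStruc_clause Mo ha ι A' A hAA' U w R s]
    exact propext (h R s)

end Pointwise

section Finite

/-- Index set for the random variables relevant to the domain `Fin n'`. -/
def J (a n' : ℕ) : Type := Σ k : Fin (a + 1), {t : Fin (k : ℕ) → Fin n' // StrictMono t}

instance (a n' : ℕ) : Finite (J a n') := by
  unfold J; infer_instance

/-- Embedding of the relevant index set into the full index set. -/
def embJ (a n' : ℕ) : J a n' → Idx a :=
  fun x => ⟨x.1, ⟨fun i => ((x.2.1 i : Fin n') : ℕ), fun p q h => x.2.2 h⟩⟩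

lemma embJ_inj (a n' : ℕ) : Function.Injective (embJ a n') := by
  rintro ⟨k1, t1, h1⟩ ⟨k2, t2, h2⟩ h
  obtain ⟨hk, ht⟩ := Sigma.mk.inj_iff.mp h
  subst hk
  refine congrArg _ (Subtype.ext ?_)
  have ht' := eq_of_heq ht
  have := congrArg Subtype.val ht'
  funext i
  exact Fin.val_injective (congrFun this i)

/-- Gluing a finitely-indexed family of reals into a fully-indexed one. -/
noncomputable def extglue (a n' : ℕ) (g : J a n' → ℝ) : Idx a → ℝ :=
  fun i => if h : ∃ jj, embJ a n' jj = i then g h.choose else 0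

lemma extglue_emb (a n' : ℕ) {Ω : Type} (V : Idx a → Ω → ℝ) (w : Ω) (jj : J a n') :
    extglue a n' (fun j2 => V (embJ a n' j2) w) (embJ a n' jj) = V (embJ a n' jj) w := by
  have hex : ∃ j2, embJ a n' j2 = embJ a n' jj := ⟨jj, rfl⟩
  simp only [extglue, dif_pos hex]
  exact congrArg (fun i => V i w) hex.choose_spec

variable {L : Type} {ar : L → ℕ} {E : Set L} {a : ℕ}

/-- `ahkStruc` only depends on the random variables at indices coming from the domain. -/
lemma ahkStruc_coord (Mo : AHKModel L ar E a) (ha : ∀ R : L, ar R ≤ a)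
    {Ω Ω' : Type} (U : Idx a → Ω → ℝ) (V : Idx a → Ω' → ℝ) (w : Ω) (w' : Ω') {n' : ℕ}
    (A' : Struc ↥E (fun R => ar ↑R) (Fin n'))
    (h : ∀ jj : J a n', U (embJ a n' jj) w = V (embJ a n' jj) w') :
    ahkStruc Mo ha U w A' = ahkStruc Mo ha V w' A' := by
  funext R t
  by_cases hR : R ∈ E
  · simp only [ahkStruc, dif_pos hR]
  · simp only [ahkStruc, dif_neg hR]
    have hmc : (Finset.image t Finset.univ).card ≤ a :=
      le_trans (le_trans Finset.card_image_le (by simp)) (ha R)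
    refine congrArg (fun (g : AHKInput L ar E _) => Mo.f _ _ g ⟨R, hR⟩ _) ?_
    funext k' s'
    simp only [ahkArgs]
    refine Prod.ext ?_ rfl
    exact h ⟨⟨(k' : ℕ), Nat.lt_succ_of_le (le_trans (Nat.lt_succ_iff.mp k'.isLt) hmc)⟩,
      ⟨fun i => ((Finset.image t Finset.univ).orderIsoOfFin rfl) (s'.1 i),
        fun p q hpq => ((Finset.image t Finset.univ).orderIsoOfFin rfl).strictMono (s'.2 hpq)⟩⟩

end Finite

section Meas

open scoped ENNReal

variable {L : Type} {ar : L → ℕ} {E : Set L} {a : ℕ}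

lemma measSet_intdata {γ : Type} [MeasurableSpace γ] {m : ℕ} {F : γ → IntData L ar E m}
    (hF : Measurable F) (Q : IntData L ar E m → Prop) : MeasurableSet {g | Q (F g)} :=
  hF (show MeasurableSet[⊤] {d | Q d} from trivial)

lemma measurable_SX [Fintype L] (Mo : AHKModel L ar E a) (ha : ∀ R : L, ar R ≤ a) {n' : ℕ}
    (A' : Struc ↥E (fun R => ar ↑R) (Fin n')) (X : Struc L ar (Fin n')) :
    MeasurableSet {g : J a n' → ℝ |
      ahkStruc Mo ha (fun i (_ : Unit) => extglue a n' g i) () A' = X} := by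
  have hset : {g : J a n' → ℝ |
        ahkStruc Mo ha (fun i (_ : Unit) => extglue a n' g i) () A' = X}
      = ⋂ (R : L), ⋂ (t : Fin (ar R) → Fin n'),
        {g | ahkStruc Mo ha (fun i (_ : Unit) => extglue a n' g i) () A' R t = X R t} := by
    ext g
    simp only [Set.mem_setOf_eq, Set.mem_iInter]
    constructor
    · intro h R t; rw [h]
    · intro h; funext R t; exact h R t
  rw [hset]
  refine MeasurableSet.iInter fun R => MeasurableSet.iInter fun t => ?_
  by_cases hR : R ∈ E
  · have hconst : ∀ g : J a n' → ℝ,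
        ahkStruc Mo ha (fun i (_ : Unit) => extglue a n' g i) () A' R t = A' ⟨R, hR⟩ t :=
      fun g => by simp only [ahkStruc, dif_pos hR]
    simp only [hconst]
    by_cases hX : A' ⟨R, hR⟩ t = X R t
    · simp only [hX, Set.setOf_true]; exact MeasurableSet.univ
    · simp only [hX, Set.setOf_false]; exact MeasurableSet.empty
  · simp only [ahkStruc, dif_neg hR]
    have HM : (Finset.image t Finset.univ).card ≤ a :=
      le_trans (le_trans Finset.card_image_le (by simp)) (ha R)
    have hargs : Measurable (fun g : J a n' → ℝ =>
        ahkArgs (Ω := Unit) (fun i _ => extglue a n' g i) () HM A'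
          (fun i => ↑((Finset.image t Finset.univ).orderIsoOfFin rfl i))
          (fun x y h => ((Finset.image t Finset.univ).orderIsoOfFin rfl).strictMono h)) := by
      apply measurable_pi_lambda
      intro k'
      apply measurable_pi_lambda
      intro s'
      refine Measurable.prod ?_ measurable_const
      simp only [ahkArgs]
      by_cases hex : ∃ jj, embJ a n' jj
          = ⟨⟨(k' : ℕ), Nat.lt_succ_of_le (le_trans (Nat.lt_succ_iff.mp k'.isLt) HM)⟩,
            ⟨fun i => (((Finset.image t Finset.univ).orderIsoOfFin rfl (s'.1 i) : Fin n') : ℕ),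
              fun x y h => (((Finset.image t Finset.univ).orderIsoOfFin rfl).strictMono
                (s'.2 h))⟩⟩
      · simp only [extglue, dif_pos hex]
        exact measurable_pi_apply _
      · simp only [extglue, dif_neg hex]
        exact measurable_const
    suffices hsuf : ∀ v : {u : Fin (ar R) → Fin ((Finset.image t Finset.univ).card) //
        Function.Surjective u},
        MeasurableSet {g : J a n' → ℝ |
          Mo.f (Finset.image t Finset.univ).card HM
            (ahkArgs (fun i _ => extglue a n' g i) () HM A'
              (fun i => ↑((Finset.image t Finset.univ).orderIsoOfFin rfl i))
              (fun x y h => ((Finset.image t Finset.univ).orderIsoOfFin rfl).strictMono h))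
            ⟨R, hR⟩ v = X R t} by exact hsuf _
    intro v
    exact measSet_intdata ((Mo.measurable _ HM).comp hargs) (fun d => d ⟨R, hR⟩ v = X R t)

end Meas

section IID

open MeasureTheory

variable {a : ℕ} {Ω : Type} [MeasurableSpace Ω]

lemma map_iid (μ : Measure Ω) [IsProbabilityMeasure μ]
    (U : Idx a → Ω → ℝ) (hUmeas : ∀ i, Measurable (U i))
    (hiid : ProbabilityTheory.iIndepFun
      (m := fun _ : Idx a => (inferInstance : MeasurableSpace ℝ)) U μ)
    (hunif : ∀ i, μ.map (U i) = volume.restrict (Set.Icc (0 : ℝ) 1))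
    {JT : Type} [Fintype JT] (θ : JT → Idx a) (hθ : Function.Injective θ) :
    μ.map (fun w (jj : JT) => U (θ jj) w)
      = Measure.pi (fun _ : JT => volume.restrict (Set.Icc (0 : ℝ) 1)) := by
  haveI : IsFiniteMeasure (volume.restrict (Set.Icc (0 : ℝ) 1)) :=
    ⟨by simp [Real.volume_Icc]⟩
  have hmeas : Measurable (fun w (jj : JT) => U (θ jj) w) :=
    measurable_pi_lambda _ (fun jj => hUmeas (θ jj))
  refine (Measure.pi_eq ?_).symm
  intro sets hsets
  rw [Measure.map_apply hmeas (MeasurableSet.univ_pi (fun i => hsets i))]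
  classical
  set setsExt : ∀ i : Idx a, Set ℝ :=
    fun i => if h : ∃ jj, θ jj = i then sets h.choose else Set.univ with hseDef
  have hse : ∀ jj, setsExt (θ jj) = sets jj := by
    intro jj
    have hex : ∃ j2, θ j2 = θ jj := ⟨jj, rfl⟩
    simp only [hseDef, dif_pos hex]
    rw [hθ hex.choose_spec]
  have hpre : (fun w (jj : JT) => U (θ jj) w) ⁻¹' Set.pi Set.univ sets
      = ⋂ i ∈ Finset.image θ Finset.univ, U i ⁻¹' setsExt i := by
    ext w
    simp only [Set.mem_preimage, Set.mem_pi, Set.mem_univ, forall_true_left,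
      Set.mem_iInter, Finset.mem_image, Finset.mem_univ, true_and]
    constructor
    · rintro h i ⟨jj, rfl⟩
      rw [hse]
      exact h jj
    · intro h jj
      have := h (θ jj) ⟨jj, rfl⟩
      rwa [hse] at this
  rw [hpre, hiid.measure_inter_preimage_eq_mul (Finset.image θ Finset.univ)
    (fun i _ => by
      by_cases h : ∃ jj, θ jj = i
      · simp only [hseDef, dif_pos h]; exact hsets _
      · simp only [hseDef, dif_neg h]; exact MeasurableSet.univ),
    Finset.prod_image (fun x _ y _ h => hθ h)]
  refine Finset.prod_congr rfl fun jj _ => ?_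
  rw [hse jj, ← Measure.map_apply (hUmeas (θ jj)) (hsets jj), hunif (θ jj)]

end IID

section Inj

variable {a : ℕ}

lemma relabel_embJ_inj (n' n : ℕ) (ι : Fin n' ↪ Fin n) :
    Function.Injective (fun jj : J a n' => relabel (a := a) n' n ι (embJ a n' jj)) := by
  rintro ⟨k1, t1, h1⟩ ⟨k2, t2, h2⟩ h
  simp only [relabel, embJ] at h
  obtain ⟨hk, ht⟩ := Sigma.mk.inj_iff.mp h
  subst hk
  have ht' := eq_of_heq ht
  have hr := congrArg (fun v : {u : Fin (k1 : ℕ) → ℕ // StrictMono u} => Set.range v.1) ht'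
  rw [range_sortTup, range_sortTup] at hr
  have hr2 : Set.range (fun i => ((t1 i : Fin n') : ℕ))
      = Set.range (fun i => ((t2 i : Fin n') : ℕ)) := by
    have e1 : (fun i => extmap n' n ι ((t1 i : Fin n') : ℕ))
        = (extmap n' n ι) ∘ (fun i => ((t1 i : Fin n') : ℕ)) := rfl
    have e2 : (fun i => extmap n' n ι ((t2 i : Fin n') : ℕ))
        = (extmap n' n ι) ∘ (fun i => ((t2 i : Fin n') : ℕ)) := rfl
    rw [e1, e2, Set.range_comp, Set.range_comp] at hr
    exact Set.image_injective.mpr (extmap_inj n' n ι) hr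
  have heq : (fun i => ((t1 i : Fin n') : ℕ)) = fun i => ((t2 i : Fin n') : ℕ) :=
    strictMono_canon (fun x y hxy => h1 hxy) (fun x y hxy => h2 hxy) hr2
  refine congrArg _ (Subtype.ext ?_)
  funext i
  exact Fin.val_injective (congrFun heq i)

end Inj

/-- the family of distributions induced by an AHK model (via i.i.d.
uniform `[0,1]` random variables and the permutation-equivariant functions `f_m`) is
projective: its marginals are invariant under embeddings of extensional structures. -/
theorem stmt15 {L : Type} [Fintype L] (ar : L → ℕ) (E : Set L)
    (a : ℕ) (ha : ∀ R : L, ar R ≤ a) (ha1 : 1 ≤ a)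
    {Ω : Type} [MeasurableSpace Ω] (μ : Measure Ω) [IsProbabilityMeasure μ]
    (U : Idx a → Ω → ℝ) (hUmeas : ∀ i, Measurable (U i))
    (hiid : ProbabilityTheory.iIndepFun
      (m := fun _ : Idx a => (inferInstance : MeasurableSpace ℝ)) U μ)
    (hunif : ∀ i, μ.map (U i) = volume.restrict (Set.Icc (0 : ℝ) 1))
    (Mo : AHKModel L ar E a) :
    ∀ (n' n : ℕ) (ι : Fin n' ↪ Fin n)
      (A' : Struc ↥E (fun R => ar ↑R) (Fin n'))
      (A : Struc ↥E (fun R => ar ↑R) (Fin n)),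
      ExtendsAlong ι A' A →
      ∀ X : Struc L ar (Fin n'),
        μ {w | ahkStruc Mo ha U w A' = X} =
          μ {w | ExtendsAlong ι X (ahkStruc Mo ha U w A)} := by
  
  intro n' n ι A' A hAA' X
  haveI : Fintype (J a n') := Fintype.ofFinite _
  have hpt : {w | ExtendsAlong ι X (ahkStruc Mo ha U w A)}
      = {w | ahkStruc Mo ha (fun i => U (relabel n' n ι i)) w A' = X} := by
    ext w
    exact (ahkStruc_pointwise Mo ha ι A' A hAA' U w X).symm
  rw [hpt]
  have hglue : ∀ (V : Idx a → Ω → ℝ) (w : Ω),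
      (ahkStruc Mo ha V w A' = X)
        ↔ (fun jj => V (embJ a n' jj) w) ∈ {g : J a n' → ℝ |
            ahkStruc Mo ha (fun i (_ : Unit) => extglue a n' g i) () A' = X} := by
    intro V w
    have hc : ahkStruc Mo ha V w A'
        = ahkStruc Mo ha
            (fun i (_ : Unit) => extglue a n' (fun jj => V (embJ a n' jj) w) i) () A' :=
      ahkStruc_coord Mo ha V _ w () A' (fun jj => (extglue_emb a n' V w jj).symm)
    rw [Set.mem_setOf_eq, ← hc]
  have h1 : {w | ahkStruc Mo ha U w A' = X}
      = (fun w (jj : J a n') => U (embJ a n' jj) w) ⁻¹' {g : J a n' → ℝ |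
          ahkStruc Mo ha (fun i (_ : Unit) => extglue a n' g i) () A' = X} := by
    ext w; exact hglue U w
  have h2 : {w | ahkStruc Mo ha (fun i => U (relabel n' n ι i)) w A' = X}
      = (fun w (jj : J a n') => U (relabel n' n ι (embJ a n' jj)) w) ⁻¹' {g : J a n' → ℝ |
          ahkStruc Mo ha (fun i (_ : Unit) => extglue a n' g i) () A' = X} := by
    ext w; exact hglue (fun i => U (relabel n' n ι i)) w
  rw [h1, h2]
  have hSX := measurable_SX Mo ha A' X
  rw [← Measure.map_apply (measurable_pi_lambda _ (fun jj => hUmeas _)) hSX,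
    ← Measure.map_apply (measurable_pi_lambda _ (fun jj => hUmeas _)) hSX,
    map_iid μ U hUmeas hiid hunif (embJ a n') (embJ_inj a n'),
    map_iid μ U hUmeas hiid hunif _ (relabel_embJ_inj n' n ι)]
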